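/- arXiv:2305.14474 — 2 statements merged into one kernel-verified Lean document; each statement's English description precedes it below -/
import Mathlib

section
/- For α ∈ (0,1) consider the energy I_α(μ) = ∬ (-log|x-y| + α(x₁-y₁)²/|x-y|²) dμ(y)dμ(x) + ∫ |x|² dμ(x) on probability measures on ℝ². The normalized characteristic function of the ellipse E_α = {x ∈ ℝ² : x₁²/(1-α) + x₂²/(1+α) ≤ 1}, namely μ_α = χ_{E_α}/|E_α|, has semi-axes a₁ = √(1-α), a₂ = √(1+α) satisfying a₁² + a₂² = 2 and these semi-axes solve the system (1/π)∫_{S¹} Ψ̂_α(y) y_j y_k / (a₁² y₁² + a₂² y₂²) dH¹(y) = δ_{jk} for j,k = 1,2, where Ψ̂_α(y) = (1-α) y₁² + (1+α) y₂² for y ∈ S¹. -/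
open Real MeasureTheory Set Filter
open scoped ENNReal NNReal Topology

noncomputable section EllipseAux

local notation "EE" => EuclideanSpace ℝ (Fin 2)
local notation "SS" => Metric.sphere (0 : EuclideanSpace ℝ (Fin 2)) 1

def cpt (t : ℝ) : EE := (EuclideanSpace.equiv (Fin 2) ℝ).symm ![Real.cos t, Real.sin t]

lemma cpt_zero (t : ℝ) : cpt t 0 = Real.cos t := rfl
lemma cpt_one (t : ℝ) : cpt t 1 = Real.sin t := rfl

lemma dist_pair (x y : EE) : dist x y = Real.sqrt ((x 0 - y 0)^2 + (x 1 - y 1)^2) := by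
  rw [EuclideanSpace.dist_eq, Fin.sum_univ_two]
  simp [Real.dist_eq, sq_abs]

lemma sphere_coords {y : EE} (h : y ∈ Metric.sphere (0:EE) 1) : (y 0)^2 + (y 1)^2 = 1 := by
  have := mem_sphere_zero_iff_norm.mp h
  rw [EuclideanSpace.norm_eq, Fin.sum_univ_two] at this
  simp only [Real.norm_eq_abs, sq_abs] at this
  exact Real.sqrt_eq_one.mp this

lemma cpt_mem_sphere (t : ℝ) : cpt t ∈ Metric.sphere (0:EE) 1 := by
  rw [mem_sphere_zero_iff_norm, EuclideanSpace.norm_eq, Fin.sum_univ_two]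
  simp only [Real.norm_eq_abs, sq_abs, cpt_zero, cpt_one]
  rw [Real.cos_sq_add_sin_sq, Real.sqrt_one]

lemma lips_cpt : LipschitzWith 1 cpt := by
  apply LipschitzWith.of_dist_le_mul
  intro s t
  rw [dist_pair, NNReal.coe_one, one_mul, Real.dist_eq, cpt_zero, cpt_one, cpt_zero, cpt_one]
  have key : (Real.cos s - Real.cos t)^2 + (Real.sin s - Real.sin t)^2 = 2 - 2*Real.cos (s - t) := by
    have h1 := Real.cos_sub s t
    nlinarith [Real.sin_sq_add_cos_sq s, Real.sin_sq_add_cos_sq t]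
  rw [key, ← Real.sqrt_sq_eq_abs]
  apply Real.sqrt_le_sqrt
  nlinarith [Real.one_sub_sq_div_two_le_cos (x := s - t)]

def Z (y : EE) : ℂ := (y 0 : ℂ) + (y 1 : ℂ) * Complex.I

lemma Z_cpt (t : ℝ) : Z (cpt t) = Complex.cos t + Complex.sin t * Complex.I := by
  simp [Z, cpt_zero, cpt_one]

lemma arg_Z_cpt {t : ℝ} (ht : t ∈ Set.Ioc (-π) π) : (Z (cpt t)).arg = t := by
  rw [Z_cpt]; exact Complex.arg_cos_add_sin_mul_I ht

lemma sphere_repr {y : EE} (h : y ∈ Metric.sphere (0:EE) 1) : y = cpt ((Z y).arg) := by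
  have habs : ‖Z y‖ = 1 := by
    rw [Complex.norm_def, Complex.normSq_apply]
    simp only [Z, Complex.add_re, Complex.ofReal_re, Complex.mul_re, Complex.I_re,
      Complex.ofReal_im, Complex.I_im, Complex.add_im, Complex.mul_im]
    rw [show (y 0 + (y 1 * 0 - 0 * 1)) * (y 0 + (y 1 * 0 - 0 * 1)) + (0 + (y 1 * 1 + 0 * 0)) * (0 + (y 1 * 1 + 0 * 0)) = (y 0)^2 + (y 1)^2 by ring, sphere_coords h, Real.sqrt_one]
  have hrepr := Complex.norm_mul_cos_add_sin_mul_I (Z y)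
  rw [habs, Complex.ofReal_one, one_mul] at hrepr
  have h0 : y 0 = Real.cos ((Z y).arg) := by
    have := congrArg Complex.re hrepr
    simpa [Z, Complex.cos_ofReal_re] using this.symm
  have h1 : y 1 = Real.sin ((Z y).arg) := by
    have := congrArg Complex.im hrepr
    simpa [Z, Complex.sin_ofReal_im, Complex.sin_ofReal_re] using this.symm
  ext i
  fin_cases i
  · exact h0
  · exact h1

lemma Z_def (y : EE) : Z y = (y 0 : ℂ) + (y 1 : ℂ) * Complex.I := rfl

lemma measurable_argZ : Measurable (fun y : EE => (Z y).arg) := by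
  apply Complex.measurable_arg.comp
  have : Continuous (fun y : EE => (y 0 : ℂ) + (y 1 : ℂ) * Complex.I) := by fun_prop
  simp only [← Z_def] at this
  exact this.measurable

lemma sphere_measure_le : μH[1] (Metric.sphere (0:EE) 1) ≤ ENNReal.ofReal (2*π) := by
  have hsub : Metric.sphere (0:EE) 1 ⊆ cpt '' Set.Ioc (-π) π := by
    intro y hy
    exact ⟨(Z y).arg, Complex.arg_mem_Ioc _, (sphere_repr hy).symm⟩
  have h1 := lips_cpt.hausdorffMeasure_image_le zero_le_one (Set.Ioc (-π) π)
  simp only [ENNReal.coe_one, ENNReal.one_rpow, one_mul] at h1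
  refine le_trans (measure_mono hsub) (le_trans h1 ?_)
  rw [MeasureTheory.hausdorffMeasure_real, Real.volume_Ioc]
  apply le_of_eq; congr 1; ring

-- projection lipschitz
lemma proj_lips (a b : ℝ) (hab : a^2 + b^2 = 1) : LipschitzWith 1 (fun y : EE => a * y 0 + b * y 1) := by
  apply LipschitzWith.of_dist_le_mul
  intro x y
  rw [NNReal.coe_one, one_mul, Real.dist_eq, dist_pair, ← Real.sqrt_sq_eq_abs]
  apply Real.sqrt_le_sqrt
  nlinarith [sq_nonneg (a*(x 1 - y 1) - b*(x 0 - y 0)), sq_nonneg (x 0 - y 0), sq_nonneg (x 1 - y 1)]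

-- arc lower bound
lemma arc_lower (mid h : ℝ) (h0 : 0 < h) (h2 : h ≤ π/2) (hl : -π ≤ mid - h) (hr : mid + h ≤ π) :
    ENNReal.ofReal (2 * Real.sin h) ≤
      μH[1] {y : EE | y ∈ Metric.sphere (0:EE) 1 ∧ (Z y).arg ∈ Set.Ioc (mid - h) (mid + h)} := by
  set A := {y : EE | y ∈ Metric.sphere (0:EE) 1 ∧ (Z y).arg ∈ Set.Ioc (mid - h) (mid + h)}
  set g : EE → ℝ := fun y => -Real.sin mid * y 0 + Real.cos mid * y 1 with hg
  have glip : LipschitzWith 1 g := by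
    apply proj_lips
    rw [neg_pow]
    nlinarith [Real.sin_sq_add_cos_sq mid]
  have hsubset : Set.Ioc (-Real.sin h) (Real.sin h) ⊆ g '' A := by
    intro v hv
    have hsh : Real.sin h ≤ 1 := Real.sin_le_one h
    have hv1 : -1 ≤ v := le_trans (by linarith [Real.neg_one_le_sin h, hv.1] : (-1:ℝ) ≤ -Real.sin h) hv.1.le
    have hv1' : v ≤ 1 := le_trans hv.2 hsh
    set φ := Real.arcsin v with hφ
    have harc1 : -h < φ := by
      have : Real.arcsin (-Real.sin h) < Real.arcsin v := by
        apply Real.strictMonoOn_arcsin ⟨by linarith, by linarith [Real.neg_one_le_sin h]⟩ ⟨hv1, hv1'⟩ hv.1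
      rwa [Real.arcsin_neg, Real.arcsin_sin (by linarith) (by linarith)] at this
    have harc2 : φ ≤ h := by
      have : Real.arcsin v ≤ Real.arcsin (Real.sin h) := Real.monotone_arcsin hv.2
      rwa [Real.arcsin_sin (by linarith) (by linarith)] at this
    refine ⟨cpt (mid + φ), ⟨cpt_mem_sphere _, ?_⟩, ?_⟩
    · rw [arg_Z_cpt ⟨by linarith, by linarith⟩]
      constructor <;> [linarith; linarith]
    · rw [hg]
      simp only [cpt_zero, cpt_one]
      rw [show -Real.sin mid * Real.cos (mid + φ) + Real.cos mid * Real.sin (mid + φ)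
          = Real.sin (mid + φ - mid) by rw [Real.sin_sub]; ring]
      rw [show mid + φ - mid = φ by ring, hφ, Real.sin_arcsin hv1 hv1']
  have h1 := glip.hausdorffMeasure_image_le zero_le_one A
  simp only [ENNReal.coe_one, ENNReal.one_rpow, one_mul] at h1
  refine le_trans ?_ (le_trans (measure_mono hsubset) h1)
  rw [MeasureTheory.hausdorffMeasure_real, Real.volume_Ioc]
  apply le_of_eq; congr 1; ring

lemma sphere_measure_ge (n : ℕ) (hn : 2 ≤ n) :
    ENNReal.ofReal ((n : ℝ) * (2 * Real.sin (π / n))) ≤ μH[1] (Metric.sphere (0:EE) 1) := by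
  have hπ := Real.pi_pos
  have hn0 : (0:ℝ) < n := by positivity
  set h : ℝ := π / n with hh
  have h0 : 0 < h := by positivity
  have h2 : h ≤ π / 2 := by
    have hcast : (2:ℝ) ≤ n := by exact_mod_cast hn
    rw [hh, div_le_div_iff₀ hn0 two_pos]
    nlinarith
  set A : ℕ → Set EE := fun m =>
    {y : EE | y ∈ Metric.sphere (0:EE) 1 ∧ (Z y).arg ∈ Set.Ioc (-π + 2*m*h) (-π + 2*(m+1)*h)} with hA
  have hmeas : ∀ m, MeasurableSet (A m) := fun m => by
    apply MeasurableSet.inter Metric.isClosed_sphere.measurableSet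
    exact measurable_argZ measurableSet_Ioc
  have hdisj : (Finset.range n : Set ℕ).PairwiseDisjoint A := by
    intro i _ j _ hij
    refine Set.disjoint_left.mpr fun y hyi hyj => ?_
    rcases lt_or_gt_of_ne hij with hlt | hlt
    · have := hyi.2.2; have := hyj.2.1
      have : (2*(i:ℝ)+2) ≤ 2*j := by
        have : (i:ℝ) + 1 ≤ j := by exact_mod_cast hlt
        linarith
      nlinarith [hyi.2.2, hyj.2.1]
    · have : (2*(j:ℝ)+2) ≤ 2*i := by
        have : (j:ℝ) + 1 ≤ i := by exact_mod_cast hlt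
        linarith
      nlinarith [hyj.2.2, hyi.2.1]
  have hunion : ∀ y ∈ Metric.sphere (0:EE) 1, ∃ m ∈ Finset.range n, y ∈ A m := by
    intro y hy
    have harg := Complex.arg_mem_Ioc (Z y)
    set θ := (Z y).arg
    set q : ℝ := (θ + π) / (2*h) with hq
    have hq0 : 0 < q := by
      apply div_pos (by linarith [harg.1]) (by linarith)
    have hqn : q ≤ n := by
      rw [hq, div_le_iff₀ (by linarith)]
      have : 2 * (n:ℝ) * h = 2*π := by rw [hh]; field_simp
      nlinarith [harg.2]
    set m : ℕ := ⌈q⌉₊ - 1 with hm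
    have hceil1 : 1 ≤ ⌈q⌉₊ := Nat.one_le_ceil_iff.mpr hq0
    have hmq : (m : ℝ) < q := by
      have : ((⌈q⌉₊ : ℝ) - 1) < q := by
        have := Nat.ceil_lt_add_one (le_of_lt hq0)
        linarith
      rw [hm]
      push_cast [Nat.cast_sub hceil1]
      linarith
    have hqm : q ≤ (m : ℝ) + 1 := by
      have := Nat.le_ceil q
      rw [hm]
      push_cast [Nat.cast_sub hceil1]
      linarith
    refine ⟨m, Finset.mem_range.mpr ?_, hy, ?_, ?_⟩
    · have : ⌈q⌉₊ ≤ n := Nat.ceil_le.mpr hqn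
      omega
    · have : 2*(m:ℝ)*h < θ + π := by
        rw [hq] at hmq
        calc 2*(m:ℝ)*h = (m:ℝ) * (2*h) := by ring
        _ < (θ + π)/(2*h) * (2*h) := by
            apply mul_lt_mul_of_pos_right hmq (by linarith)
        _ = θ + π := by field_simp
      linarith
    · have : θ + π ≤ 2*((m:ℝ)+1)*h := by
        rw [hq] at hqm
        calc θ + π = (θ + π)/(2*h) * (2*h) := by field_simp
        _ ≤ ((m:ℝ)+1) * (2*h) := by
            apply mul_le_mul_of_nonneg_right hqm (by linarith)
        _ = 2*((m:ℝ)+1)*h := by ring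
      linarith
  have e1 : (n : ℝ≥0∞) * ENNReal.ofReal (2 * Real.sin h)
      = ∑ m ∈ Finset.range n, ENNReal.ofReal (2 * Real.sin h) := by
    rw [Finset.sum_const, nsmul_eq_mul, Finset.card_range]
  have e2 : ∑ m ∈ Finset.range n, ENNReal.ofReal (2 * Real.sin h)
      ≤ ∑ m ∈ Finset.range n, μH[1] (A m) := by
    apply Finset.sum_le_sum
    intro m hm
    have hmn := Finset.mem_range.mp hm
    have heq : A m = {y : EE | y ∈ Metric.sphere (0:EE) 1 ∧
        (Z y).arg ∈ Set.Ioc ((-π + (2*m+1)*h) - h) ((-π + (2*m+1)*h) + h)} := by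
      rw [hA]; congr 2 <;> ring_nf
    rw [heq]
    apply arc_lower _ _ h0 h2
    · push_cast; nlinarith [Nat.cast_nonneg (α := ℝ) m]
    · have hle : (m:ℝ) + 1 ≤ n := by exact_mod_cast hmn
      have h2nh : 2 * (n:ℝ) * h = 2*π := by rw [hh]; field_simp
      nlinarith
  have e3 : ∑ m ∈ Finset.range n, μH[1] (A m) = μH[1] (⋃ m ∈ Finset.range n, A m) := by
    rw [measure_biUnion_finset hdisj (fun m _ => hmeas m)]
  have e4 : μH[1] (⋃ m ∈ Finset.range n, A m) ≤ μH[1] (Metric.sphere (0:EE) 1) := by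
    apply measure_mono
    intro y hy
    simp only [Set.mem_iUnion] at hy
    obtain ⟨m, _, hym⟩ := hy
    exact hym.1
  have hsum : (n : ℝ≥0∞) * ENNReal.ofReal (2 * Real.sin h) ≤ μH[1] (Metric.sphere (0:EE) 1) := by
    rw [e1]; exact le_trans e2 (le_trans (le_of_eq e3) e4)
  refine le_trans (le_of_eq ?_) hsum
  rw [ENNReal.ofReal_mul (by positivity), ENNReal.ofReal_natCast]

lemma tendsto_key : Tendsto (fun n : ℕ => (n : ℝ) * (2 * Real.sin (π / n))) atTop (𝓝 (2*π)) := by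
  have hslope : Tendsto (fun x : ℝ => Real.sin x / x) (𝓝[≠] 0) (𝓝 1) := by
    have h := (Real.hasDerivAt_sin 0)
    rw [hasDerivAt_iff_tendsto_slope] at h
    simp only [Real.cos_zero] at h
    have : (slope Real.sin 0) = fun x => Real.sin x / x := by
      funext x; simp [slope, Real.sin_zero]; ring
    rwa [this] at h
  have hdiv : Tendsto (fun n : ℕ => π / (n:ℝ)) atTop (𝓝[≠] 0) := by
    apply tendsto_nhdsWithin_of_tendsto_nhds_of_eventually_within
    · exact tendsto_const_div_atTop_nhds_zero_nat π
    · filter_upwards [eventually_ge_atTop 1] with n hn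
      have : (0:ℝ) < n := by exact_mod_cast hn
      have := Real.pi_pos
      simp only [Set.mem_compl_iff, Set.mem_singleton_iff]
      positivity
  have hmain : Tendsto (fun n : ℕ => 2*π * (Real.sin (π/n) / (π/n))) atTop (𝓝 (2*π)) := by
    have := (hslope.comp hdiv).const_mul (2*π)
    simpa using this
  apply hmain.congr'
  filter_upwards [eventually_ge_atTop 1] with n hn
  have hn0 : (0:ℝ) < n := by exact_mod_cast hn
  have hπ := Real.pi_pos
  field_simp

lemma sphere_measure : μH[1] (Metric.sphere (0:EE) 1) = ENNReal.ofReal (2*π) := by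
  refine le_antisymm sphere_measure_le ?_
  have h2 : Tendsto (fun n : ℕ => ENNReal.ofReal ((n:ℝ) * (2 * Real.sin (π / n)))) atTop
      (𝓝 (ENNReal.ofReal (2*π))) := (ENNReal.continuous_ofReal.tendsto _).comp tendsto_key
  apply le_of_tendsto h2
  filter_upwards [eventually_ge_atTop 2] with n hn
  exact sphere_measure_ge n hn

def eswap : EE ≃ᵢ EE where
  toFun := fun y => (EuclideanSpace.equiv (Fin 2) ℝ).symm ![y 1, y 0]
  invFun := fun y => (EuclideanSpace.equiv (Fin 2) ℝ).symm ![y 1, y 0]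
  left_inv := fun y => by ext i; fin_cases i <;> rfl
  right_inv := fun y => by ext i; fin_cases i <;> rfl
  isometry_toFun := Isometry.of_dist_eq fun x y => by
    rw [dist_pair, dist_pair]
    show Real.sqrt ((x 1 - y 1)^2 + (x 0 - y 0)^2) = _
    ring_nf

def eneg : EE ≃ᵢ EE where
  toFun := fun y => (EuclideanSpace.equiv (Fin 2) ℝ).symm ![-(y 0), y 1]
  invFun := fun y => (EuclideanSpace.equiv (Fin 2) ℝ).symm ![-(y 0), y 1]
  left_inv := fun y => by ext i; fin_cases i <;> simp
  right_inv := fun y => by ext i; fin_cases i <;> simp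
  isometry_toFun := Isometry.of_dist_eq fun x y => by
    rw [dist_pair, dist_pair]
    show Real.sqrt ((-(x 0) - -(y 0))^2 + (x 1 - y 1)^2) = _
    ring_nf

lemma preim_sphere (e : EE ≃ᵢ EE) (he : e 0 = 0) :
    ⇑e ⁻¹' (Metric.sphere (0:EE) 1) = Metric.sphere (0:EE) 1 := by
  ext y
  simp only [Set.mem_preimage, Metric.mem_sphere]
  rw [← he, e.isometry.dist_eq, he]

lemma integral_symm (e : EE ≃ᵢ EE) (he : e 0 = 0) (F : EE → ℝ) :
    ∫ y in Metric.sphere (0:EE) 1, F y ∂(μH[1]) =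
    ∫ y in Metric.sphere (0:EE) 1, F (e y) ∂(μH[1]) := by
  have mp := e.measurePreserving_hausdorffMeasure 1
  have := mp.setIntegral_preimage_emb
    (e.toHomeomorph.toMeasurableEquiv.measurableEmbedding) F (Metric.sphere (0:EE) 1)
  rw [preim_sphere e he] at this
  exact this.symm

lemma eswap0 : eswap 0 = 0 := by ext i; fin_cases i <;> rfl
lemma eneg0 : eneg 0 = 0 := by
  ext i; fin_cases i
  · show -(0:ℝ) = 0; exact neg_zero
  · rfl
example (y : EE) : eswap y 0 = y 1 := rfl
example (y : EE) : eneg y 0 = -(y 0) := rfl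

lemma eswap_apply0 (y : EE) : eswap y 0 = y 1 := rfl
lemma eswap_apply1 (y : EE) : eswap y 1 = y 0 := rfl
lemma eneg_apply0 (y : EE) : eneg y 0 = -(y 0) := rfl
lemma eneg_apply1 (y : EE) : eneg y 1 = y 1 := rfl

lemma finite_sphere : μH[1] SS ≠ ⊤ := by rw [sphere_measure]; exact ENNReal.ofReal_ne_top

instance : IsFiniteMeasure (μH[1].restrict SS) := by
  constructor
  rw [Measure.restrict_apply_univ]
  exact lt_of_le_of_lt (le_of_eq sphere_measure) ENNReal.ofReal_lt_top

lemma integrable_coord (i j : Fin 2) :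
    Integrable (fun y : EE => (y i) * (y j)) (μH[1].restrict SS) := by
  have hcont : Continuous (fun y : EE => (y i) * (y j)) := by fun_prop
  apply Integrable.mono' (integrable_const (1:ℝ)) hcont.aestronglyMeasurable
  have hmem := ae_restrict_mem (μ := μH[1]) (s := SS) Metric.isClosed_sphere.measurableSet
  filter_upwards [hmem] with y hy
  have h1 := sphere_coords hy
  have key : ∀ i : Fin 2, (y i)^2 ≤ 1 := by
    intro i
    fin_cases i
    · exact (by nlinarith [sq_nonneg (y 0), sq_nonneg (y 1)] : (y 0)^2 ≤ 1)
    · exact (by nlinarith [sq_nonneg (y 0), sq_nonneg (y 1)] : (y 1)^2 ≤ 1)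
  have h0 := key i
  have h0' := key j
  rw [Real.norm_eq_abs, abs_mul]
  nlinarith [abs_nonneg (y i), abs_nonneg (y j), sq_abs (y i), sq_abs (y j)]

lemma integral_sq0 : ∫ y in SS, (y 0) * (y 0) ∂(μH[1]) = π := by
  have hswap : ∫ y in SS, (y 0) * (y 0) ∂(μH[1]) = ∫ y in SS, (y 1) * (y 1) ∂(μH[1]) := by
    rw [integral_symm eswap eswap0 (fun y => (y 0) * (y 0))]
    simp only [eswap_apply0]
  have hadd : ∫ y in SS, ((y 0) * (y 0) + (y 1) * (y 1)) ∂(μH[1]) = 2*π := by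
    rw [setIntegral_congr_fun (Metric.isClosed_sphere.measurableSet)
      (g := fun _ => (1:ℝ)) (fun y hy => by
        have := sphere_coords hy; simp only; nlinarith)]
    rw [setIntegral_const, measureReal_def, sphere_measure, smul_eq_mul, mul_one,
      ENNReal.toReal_ofReal (by positivity)]
  rw [integral_add (integrable_coord 0 0) (integrable_coord 1 1)] at hadd
  rw [← hswap] at hadd
  linarith
lemma integral_sq1 : ∫ y in SS, (y 1) * (y 1) ∂(μH[1]) = π := by
  rw [← integral_sq0, integral_symm eswap eswap0 (fun y => (y 1) * (y 1))]
  simp only [eswap_apply1]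
lemma integral_off : ∫ y in SS, (y 0) * (y 1) ∂(μH[1]) = 0 := by
  have h := integral_symm eneg eneg0 (fun y => (y 0) * (y 1))
  simp only [eneg_apply0, eneg_apply1, neg_mul] at h
  rw [integral_neg] at h
  linarith

/-- For `α ∈ (0,1)`, the semi-axes `a₁ = √(1-α)`, `a₂ = √(1+α)` of the ellipse `E_α`
satisfy `a₁² + a₂² = 2` and solve the Euler–Lagrange system
`(1/π) ∫_{S¹} Ψ̂_α(y) y_j y_k / (a₁² y₁² + a₂² y₂²) dH¹(y) = δ_{jk}`, where
`Ψ̂_α(y) = (1-α) y₁² + (1+α) y₂²`. -/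
theorem ellipse_law_semiaxes_solve_system (α : ℝ) (hα : α ∈ Set.Ioo (0 : ℝ) 1)
    (a₁ a₂ : ℝ) (ha₁ : a₁ = Real.sqrt (1 - α)) (ha₂ : a₂ = Real.sqrt (1 + α)) :
    a₁ ^ 2 + a₂ ^ 2 = 2 ∧
    ∀ j k : Fin 2,
      (1 / π) * ∫ y in Metric.sphere (0 : EuclideanSpace ℝ (Fin 2)) 1,
          ((1 - α) * (y 0) ^ 2 + (1 + α) * (y 1) ^ 2) * (y j) * (y k) /
            (a₁ ^ 2 * (y 0) ^ 2 + a₂ ^ 2 * (y 1) ^ 2) ∂(μH[1]) =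
        if j = k then 1 else 0 := by
  obtain ⟨hα0, hα1⟩ := hα
  have hsq1 : a₁ ^ 2 = 1 - α := by rw [ha₁, Real.sq_sqrt (by linarith)]
  have hsq2 : a₂ ^ 2 = 1 + α := by rw [ha₂, Real.sq_sqrt (by linarith)]
  refine ⟨by rw [hsq1, hsq2]; ring, fun j k => ?_⟩
  have hπ := Real.pi_pos
  have hcongr : ∀ j k : Fin 2,
      ∫ y in SS, ((1 - α) * (y 0) ^ 2 + (1 + α) * (y 1) ^ 2) * (y j) * (y k) /
            (a₁ ^ 2 * (y 0) ^ 2 + a₂ ^ 2 * (y 1) ^ 2) ∂(μH[1])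
      = ∫ y in SS, (y j) * (y k) ∂(μH[1]) := by
    intro j k
    apply setIntegral_congr_fun Metric.isClosed_sphere.measurableSet
    intro y hy
    have h1 := sphere_coords hy
    have hpos : (1 - α) * (y 0) ^ 2 + (1 + α) * (y 1) ^ 2 > 0 := by
      nlinarith [sq_nonneg (y 0), sq_nonneg (y 1)]
    simp only [hsq1, hsq2]
    have hne := ne_of_gt hpos
    field_simp
  rw [hcongr j k]
  fin_cases j <;> fin_cases k <;>
    simp only [Fin.isValue, Fin.zero_eta, Fin.mk_one]
  · rw [integral_sq0]; rw [if_pos trivial]; field_simp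
  · rw [integral_off]; rw [if_neg (by decide)]; ring
  · rw [show ∫ y in SS, (y 1) * (y 0) ∂(μH[1]) = ∫ y in SS, (y 0) * (y 1) ∂(μH[1]) by
      congr 1; funext y; ring]
    rw [integral_off, if_neg (by decide)]; ring
  · rw [integral_sq1, if_pos trivial]; field_simp

end EllipseAux
end

section
/- Let Ψ̂: S¹ → [0,∞) and for a₁, a₂ > 0, R ∈ SO(2) define, for x ∈ ℝ², the vector field G(x) = −(1/π) ∫_{S¹} Ψ̂(y) (x·y) y / |D(a)Rᵀy|² dH¹(y). Suppose G(x⁰) · x⁰ + |x⁰|² = 0 for all x⁰ in the ellipse E = R·{x : x₁²/a₁² + x₂²/a₂² ≤ 1}, i.e. (1/π) ∫_{S¹} Ψ̂(y) α(x⁰,y)² dH¹(y) = |x⁰|² with α(x,y) = x·y/|D(a)Rᵀy|. Then for any x = t x⁰ with t > 1 and x⁰ ∈ ∂E, the quantity |x|² − (1/π) ∫_{S¹} Ψ̂(y) [α²χ_{|α|≤1} + (|α|/(|α| + √(α²−1)))χ_{|α|>1}](x,y) dH¹(y) equals (1/π) ∫_{S¹} Ψ̂(y) |α(x,y)| √(α(x,y)²−1)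 χ_{|α(x,y)|>1} dH¹(y), and in particular is nonnegative. -/
open Real MeasureTheory

abbrev Plane := EuclideanSpace ℝ (Fin 2)


private lemma aux_part_sum (α : ℝ) :
    (if |α| ≤ 1 then α ^ 2 else |α| / (|α| + Real.sqrt (α ^ 2 - 1)))
      + (if 1 < |α| then |α| * Real.sqrt (α ^ 2 - 1) else 0) = α ^ 2 := by
  rcases le_or_gt |α| 1 with h | h
  · rw [if_pos h, if_neg (not_lt.2 h)]; ring
  · rw [if_neg (not_le.2 h), if_pos h]
    have h0 : (0:ℝ) < |α| := lt_trans one_pos h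
    have h1 : (1:ℝ) ≤ α ^ 2 := by nlinarith [sq_abs α]
    have hs2 : Real.sqrt (α ^ 2 - 1) ^ 2 = α ^ 2 - 1 := Real.sq_sqrt (by linarith)
    have hsn : 0 ≤ Real.sqrt (α ^ 2 - 1) := Real.sqrt_nonneg _
    have hden : 0 < |α| + Real.sqrt (α ^ 2 - 1) := by linarith
    field_simp
    nlinarith [sq_abs α, hs2]

private lemma aux_part1_nonneg (α : ℝ) :
    0 ≤ (if |α| ≤ 1 then α ^ 2 else |α| / (|α| + Real.sqrt (α ^ 2 - 1))) := by
  split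
  · positivity
  · positivity

private lemma aux_part2_nonneg (α : ℝ) :
    0 ≤ (if 1 < |α| then |α| * Real.sqrt (α ^ 2 - 1) else 0) := by
  split
  · positivity
  · exact le_refl _

private lemma aux_part1_le (α : ℝ) :
    (if |α| ≤ 1 then α ^ 2 else |α| / (|α| + Real.sqrt (α ^ 2 - 1))) ≤ α ^ 2 := by
  split
  case isTrue h => exact le_refl _
  case isFalse h =>
    push_neg at h
    have h0 : (0:ℝ) < |α| := lt_trans one_pos h
    have hsn : 0 ≤ Real.sqrt (α ^ 2 - 1) := Real.sqrt_nonneg _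
    have hden : 0 < |α| + Real.sqrt (α ^ 2 - 1) := by linarith
    calc |α| / (|α| + Real.sqrt (α ^ 2 - 1)) ≤ |α| / |α| := by
          apply div_le_div_of_nonneg_left (le_of_lt h0) h0 -- maybe wrong name
          linarith
      _ = 1 := div_self (ne_of_gt h0)
      _ ≤ α ^ 2 := by nlinarith [sq_abs α]

private lemma aux_part2_le (α : ℝ) :
    (if 1 < |α| then |α| * Real.sqrt (α ^ 2 - 1) else 0) ≤ α ^ 2 := by
  split
  case isFalse h => positivity
  case isTrue h =>
    have h1 : (1:ℝ) ≤ α ^ 2 := by nlinarith [sq_abs α]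
    have hsl : Real.sqrt (α ^ 2 - 1) ≤ |α| := by
      rw [← Real.sqrt_sq_eq_abs]
      exact Real.sqrt_le_sqrt (by linarith)
    nlinarith [abs_nonneg α, sq_abs α]

private lemma aux_quarter (c ε a : ℝ) (ha : 0 < a) (hc : c ^ 2 ≤ 1) (hε : 0 ≤ ε)
    (h : ε ≤ a / 2) : (c * ε / a) ^ 2 ≤ 1 / 4 := by
  have h2 : ε / a ≤ 1 / 2 := by rw [div_le_iff₀ ha]; linarith
  have h1 : 0 ≤ ε / a := by positivity
  have he : (c * ε / a) ^ 2 = c ^ 2 * (ε / a) ^ 2 := by ring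
  rw [he]; nlinarith

set_option maxHeartbeats 1000000 in
/-- The first Euler–Lagrange equation on the ellipse implies nonnegativity of the radial
derivative of potential plus confinement outside the ellipse: with
`α(x,y) = x·y/|D(a)Rᵀy|` (rotation `R` by angle `θ`, `D(a) = diag(a₁,a₂)`), if
`(1/π)∫_{S¹} Ψ̂(y) α(x⁰,y)² dH¹(y) = |x⁰|²` for all `x⁰` in the ellipse, then for
`x = t x⁰`, `t > 1`, `x⁰ ∈ ∂E`, the quantity
`|x|² − (1/π)∫ Ψ̂(y)[α²χ_{|α|≤1} + (|α|/(|α|+√(α²−1)))χ_{|α|>1}] dH¹`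
equals `(1/π)∫ Ψ̂(y)|α|√(α²−1) χ_{|α|>1} dH¹ ≥ 0`. -/
theorem radial_monotonicity_outside_ellipse
    (a₁ a₂ θ : ℝ) (ha₁ : 0 < a₁) (ha₂ : 0 < a₂)
    (Ψ : Plane → ℝ) (hΨ : ∀ y ∈ Metric.sphere (0 : Plane) 1, 0 ≤ Ψ y)
    (nrm : Plane → ℝ)
    (hnrm : ∀ y : Plane, nrm y = Real.sqrt
      ((a₁ * (Real.cos θ * y 0 + Real.sin θ * y 1)) ^ 2 +
        (a₂ * (-Real.sin θ * y 0 + Real.cos θ * y 1)) ^ 2))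
    (alpha : Plane → Plane → ℝ)
    (halpha : ∀ x y : Plane, alpha x y = (inner ℝ x y : ℝ) / nrm y)
    -- the first Euler–Lagrange equation, on the whole (rotated) ellipse
    (hEL : ∀ x₀ : Plane,
      ((Real.cos θ * x₀ 0 + Real.sin θ * x₀ 1) / a₁) ^ 2 +
        ((-Real.sin θ * x₀ 0 + Real.cos θ * x₀ 1) / a₂) ^ 2 ≤ 1 →
      (1 / π) * ∫ y in Metric.sphere (0 : Plane) 1, Ψ y * (alpha x₀ y) ^ 2 ∂(μH[1]) =
        ‖x₀‖ ^ 2) :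
    ∀ x₀ : Plane,
      ((Real.cos θ * x₀ 0 + Real.sin θ * x₀ 1) / a₁) ^ 2 +
        ((-Real.sin θ * x₀ 0 + Real.cos θ * x₀ 1) / a₂) ^ 2 = 1 →
      ∀ t : ℝ, 1 < t →
        (‖t • x₀‖ ^ 2 - (1 / π) * ∫ y in Metric.sphere (0 : Plane) 1,
            Ψ y * (if |alpha (t • x₀) y| ≤ 1 then (alpha (t • x₀) y) ^ 2
              else |alpha (t • x₀) y| /
                (|alpha (t • x₀) y| + Real.sqrt ((alpha (t • x₀) y) ^ 2 - 1))) ∂(μH[1]) =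
          (1 / π) * ∫ y in Metric.sphere (0 : Plane) 1,
            Ψ y * (if 1 < |alpha (t • x₀) y| then
              |alpha (t • x₀) y| * Real.sqrt ((alpha (t • x₀) y) ^ 2 - 1) else 0) ∂(μH[1])) ∧
        0 ≤ ‖t • x₀‖ ^ 2 - (1 / π) * ∫ y in Metric.sphere (0 : Plane) 1,
            Ψ y * (if |alpha (t • x₀) y| ≤ 1 then (alpha (t • x₀) y) ^ 2
              else |alpha (t • x₀) y| /
                (|alpha (t • x₀) y| + Real.sqrt ((alpha (t • x₀) y) ^ 2 - 1))) ∂(μH[1]) := by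
  intro x₀ hb t ht
  have hπ : (0:ℝ) < π := Real.pi_pos
  have ht0 : (0:ℝ) < t := lt_trans one_pos ht
  have hx0 : x₀ ≠ 0 := by
    intro h
    rw [h] at hb
    norm_num at hb
  set S := Metric.sphere (0 : Plane) 1 with hS
  set μ : Measure Plane := (μH[1] : Measure Plane).restrict S with hμdef
  -- continuity / measurability of nrm
  have hnrmf : nrm = fun y : Plane => Real.sqrt
      ((a₁ * (Real.cos θ * y 0 + Real.sin θ * y 1)) ^ 2 +
        (a₂ * (-Real.sin θ * y 0 + Real.cos θ * y 1)) ^ 2) := funext hnrm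
  have hproj : ∀ i : Fin 2, Continuous fun y : Plane => y i := fun i =>
    (EuclideanSpace.proj (𝕜 := ℝ) i).continuous
  have hcont : Continuous nrm := by
    rw [hnrmf]
    exact Real.continuous_sqrt.comp (by
      apply Continuous.add <;> apply Continuous.pow <;>
        exact continuous_const.mul (((continuous_const.mul (hproj 0))).add
          (continuous_const.mul (hproj 1))))
  have hnm : Measurable nrm := hcont.measurable
  have halm : ∀ x : Plane, Measurable (alpha x) := by
    intro x
    have hfe : alpha x = fun y => (inner ℝ x y : ℝ) / nrm y := funext (halpha x)
    rw [hfe]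
    exact (Continuous.measurable (continuous_const.inner continuous_id)).div hnm
  -- on the sphere
  have hy2 : ∀ y ∈ S, (y 0) ^ 2 + (y 1) ^ 2 = 1 := by
    intro y hy
    have hn : ‖y‖ = 1 := by simpa using mem_sphere_zero_iff_norm.1 hy
    have := congrArg (· ^ 2) (EuclideanSpace.norm_eq y)
    simp only [hn] at this
    rw [Real.sq_sqrt (by positivity)] at this
    simp [Fin.sum_univ_two, Real.norm_eq_abs, sq_abs] at this
    linarith [this]
  have hnpos : ∀ y ∈ S, 0 < nrm y := by
    intro y hy
    rw [hnrm]
    have h2 := hy2 y hy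
    have hcs := Real.sin_sq_add_cos_sq θ
    apply Real.sqrt_pos.2
    have hrot : (Real.cos θ * y 0 + Real.sin θ * y 1) ^ 2
        + (-Real.sin θ * y 0 + Real.cos θ * y 1) ^ 2 = 1 := by
      linear_combination (Real.sin θ ^ 2 + Real.cos θ ^ 2) * h2 + hcs
    obtain ⟨u, hu⟩ : ∃ u, Real.cos θ * y 0 + Real.sin θ * y 1 = u := ⟨_, rfl⟩
    obtain ⟨v, hv⟩ : ∃ v, -Real.sin θ * y 0 + Real.cos θ * y 1 = v := ⟨_, rfl⟩
    rw [hu, hv] at hrot ⊢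
    have hgoal : (a₁ * u) ^ 2 + (a₂ * v) ^ 2 = a₁ ^ 2 * u ^ 2 + a₂ ^ 2 * v ^ 2 := by ring
    rw [hgoal]
    rcases le_or_gt (u ^ 2) (1 / 2) with h | h
    · have hv2 : (1:ℝ) / 2 ≤ v ^ 2 := by linarith
      nlinarith [mul_pos ha₂ ha₂, mul_nonneg (mul_nonneg ha₁.le ha₁.le) (sq_nonneg u)]
    · nlinarith [mul_pos ha₁ ha₁, mul_nonneg (mul_nonneg ha₂.le ha₂.le) (sq_nonneg v)]
  have hae_mem : ∀ᵐ y ∂μ, y ∈ S := ae_restrict_mem Metric.isClosed_sphere.measurableSet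
  have hΨae : ∀ᵐ y ∂μ, 0 ≤ Ψ y := hae_mem.mono fun y hy => hΨ y hy
  -- test points give a.e.-measurability of Ψ
  set ε : ℝ := min a₁ a₂ / 2 with hεdef
  have hε0 : 0 < ε := by positivity
  have hεa₁ : ε ≤ a₁ / 2 := by
    have := min_le_left a₁ a₂; rw [hεdef]; linarith
  have hεa₂ : ε ≤ a₂ / 2 := by
    have := min_le_right a₁ a₂; rw [hεdef]; linarith
  have hFi : ∀ i : Fin 2,
      AEStronglyMeasurable (fun y : Plane => Ψ y * (y i) ^ 2 / nrm y ^ 2) μ := by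
    intro i
    have hell : ((Real.cos θ * (ε • EuclideanSpace.single i (1:ℝ)) 0 +
          Real.sin θ * (ε • EuclideanSpace.single i (1:ℝ)) 1) / a₁) ^ 2 +
        ((-Real.sin θ * (ε • EuclideanSpace.single i (1:ℝ)) 0 +
          Real.cos θ * (ε • EuclideanSpace.single i (1:ℝ)) 1) / a₂) ^ 2 ≤ 1 := by
      have hc2 : Real.cos θ ^ 2 ≤ 1 := Real.cos_sq_le_one θ
      have hs2 : Real.sin θ ^ 2 ≤ 1 := Real.sin_sq_le_one θ
      have hns2 : (-Real.sin θ) ^ 2 ≤ 1 := by rw [neg_pow]; simpa using hs2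
      have q1 := aux_quarter (Real.cos θ) ε a₁ ha₁ hc2 hε0.le hεa₁
      have q2 := aux_quarter (-Real.sin θ) ε a₂ ha₂ hns2 hε0.le hεa₂
      have q3 := aux_quarter (Real.sin θ) ε a₁ ha₁ hs2 hε0.le hεa₁
      have q4 := aux_quarter (Real.cos θ) ε a₂ ha₂ hc2 hε0.le hεa₂
      fin_cases i <;>
        · simp only [PiLp.smul_apply, EuclideanSpace.single_apply, smul_eq_mul]
          norm_num
          ring_nf at q1 q2 q3 q4 ⊢
          linarith
    have hELi := hEL _ hell
    have hnorm : ‖ε • EuclideanSpace.single i (1:ℝ)‖ = ε := by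
      rw [norm_smul, EuclideanSpace.norm_single]
      simp [abs_of_pos hε0]
    have hint : Integrable (fun y => Ψ y * alpha (ε • EuclideanSpace.single i 1) y ^ 2) μ := by
      by_contra hni
      rw [hμdef] at hni
      rw [integral_undef hni, mul_zero, hnorm] at hELi
      nlinarith
    have heq : (fun y : Plane => Ψ y * (y i) ^ 2 / nrm y ^ 2)
        = fun y => (ε ^ 2)⁻¹ * (Ψ y * alpha (ε • EuclideanSpace.single i 1) y ^ 2) := by
      funext y
      rw [halpha, real_inner_smul_left, EuclideanSpace.inner_single_left]
      simp only [smul_eq_mul, map_one, one_mul]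
      rcases eq_or_ne (nrm y) 0 with h0 | h0
      · simp [h0]
      · field_simp
    rw [heq]
    exact hint.aestronglyMeasurable.const_mul _
  have hΨm : AEStronglyMeasurable Ψ μ := by
    have hsum : AEStronglyMeasurable (fun y : Plane =>
        (Ψ y * (y 0) ^ 2 / nrm y ^ 2 + Ψ y * (y 1) ^ 2 / nrm y ^ 2) * nrm y ^ 2) μ :=
      ((hFi 0).add (hFi 1)).mul ((hcont.pow 2).aestronglyMeasurable)
    apply hsum.congr
    filter_upwards [hae_mem] with y hy
    have h1 := hy2 y hy
    have h2 := (hnpos y hy).ne'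
    field_simp
    linear_combination Ψ y * h1
  -- main objects
  set α' : Plane → ℝ := alpha (t • x₀) with hα'
  have hαm : Measurable α' := halm _
  have hEL0 := hEL x₀ (le_of_eq hb)
  have hsc : (∫ y in S, Ψ y * α' y ^ 2 ∂(μH[1]))
      = t ^ 2 * ∫ y in S, Ψ y * alpha x₀ y ^ 2 ∂(μH[1]) := by
    rw [← integral_const_mul]
    apply integral_congr_ae
    apply ae_of_all
    intro y
    dsimp only
    simp only [hα', halpha]
    rw [real_inner_smul_left]
    ring
  have hkey : (1 / π) * (∫ y in S, Ψ y * α' y ^ 2 ∂(μH[1])) = ‖t • x₀‖ ^ 2 := by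
    rw [hsc, norm_smul, mul_pow, Real.norm_eq_abs, sq_abs, ← hEL0]
    ring
  have hAint : Integrable (fun y => Ψ y * α' y ^ 2) μ := by
    by_contra hni
    rw [hμdef] at hni
    rw [integral_undef hni, mul_zero] at hkey
    have hpos : 0 < ‖t • x₀‖ := norm_pos_iff.2 (smul_ne_zero ht0.ne' hx0)
    nlinarith
  have hFm : Measurable (fun y => if |α' y| ≤ 1 then α' y ^ 2
      else |α' y| / (|α' y| + Real.sqrt (α' y ^ 2 - 1))) := by
    apply Measurable.ite
    · exact measurableSet_le hαm.abs measurable_const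
    · exact hαm.pow_const 2
    · exact hαm.abs.div (hαm.abs.add (((hαm.pow_const 2).sub measurable_const).sqrt))
  have hGm : Measurable (fun y => if 1 < |α' y| then
      |α' y| * Real.sqrt (α' y ^ 2 - 1) else 0) := by
    apply Measurable.ite
    · exact measurableSet_lt measurable_const hαm.abs
    · exact hαm.abs.mul (((hαm.pow_const 2).sub measurable_const).sqrt)
    · exact measurable_const
  have hFint : Integrable (fun y => Ψ y * (if |α' y| ≤ 1 then α' y ^ 2
      else |α' y| / (|α' y| + Real.sqrt (α' y ^ 2 - 1)))) μ := by
    apply hAint.mono (hΨm.mul hFm.aestronglyMeasurable)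
    filter_upwards [hΨae] with y hy
    simp only [Pi.mul_apply, Real.norm_eq_abs]
    rw [abs_of_nonneg (mul_nonneg hy (aux_part1_nonneg _)),
      abs_of_nonneg (mul_nonneg hy (sq_nonneg _))]
    exact mul_le_mul_of_nonneg_left (aux_part1_le _) hy
  have hGint : Integrable (fun y => Ψ y * (if 1 < |α' y| then
      |α' y| * Real.sqrt (α' y ^ 2 - 1) else 0)) μ := by
    apply hAint.mono (hΨm.mul hGm.aestronglyMeasurable)
    filter_upwards [hΨae] with y hy
    simp only [Pi.mul_apply, Real.norm_eq_abs]
    rw [abs_of_nonneg (mul_nonneg hy (aux_part2_nonneg _)),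
      abs_of_nonneg (mul_nonneg hy (sq_nonneg _))]
    exact mul_le_mul_of_nonneg_left (aux_part2_le _) hy
  have hsplit : (∫ y in S, Ψ y * α' y ^ 2 ∂(μH[1]))
      = (∫ y in S, Ψ y * (if |α' y| ≤ 1 then α' y ^ 2
          else |α' y| / (|α' y| + Real.sqrt (α' y ^ 2 - 1))) ∂(μH[1]))
        + ∫ y in S, Ψ y * (if 1 < |α' y| then
            |α' y| * Real.sqrt (α' y ^ 2 - 1) else 0) ∂(μH[1]) := by
    rw [← integral_add hFint hGint]
    apply integral_congr_ae
    apply ae_of_all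
    intro y
    dsimp only
    rw [← mul_add, aux_part_sum]
  have hGnn : 0 ≤ ∫ y in S, Ψ y * (if 1 < |α' y| then
      |α' y| * Real.sqrt (α' y ^ 2 - 1) else 0) ∂(μH[1]) := by
    apply integral_nonneg_of_ae
    filter_upwards [hΨae] with y hy
    exact mul_nonneg hy (aux_part2_nonneg _)
  have heq1 : ‖t • x₀‖ ^ 2 - (1 / π) * (∫ y in S, Ψ y * (if |α' y| ≤ 1 then α' y ^ 2
        else |α' y| / (|α' y| + Real.sqrt (α' y ^ 2 - 1))) ∂(μH[1]))
      = (1 / π) * ∫ y in S, Ψ y * (if 1 < |α' y| then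
          |α' y| * Real.sqrt (α' y ^ 2 - 1) else 0) ∂(μH[1]) := by
    rw [← hkey, hsplit]
    ring
  refine ⟨heq1, ?_⟩
  rw [heq1]
  exact mul_nonneg (by positivity) hGnn
end
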